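/- arXiv:2303.12999 — 2 statements merged into one kernel-verified Lean document; each statement's English description precedes it below -/
import Mathlib

section
/- If f : ℝᵐ → ℝ is twice continuously differentiable, ∇f is L-Lipschitz, ∇²f is ρ-Lipschitz, and ‖∇f(w)‖ ≤ B for all w, then for 0 < α ≤ 1/L the function F(w) = f(w − α∇f(w)) has Lipschitz gradient with constant L_F = 4L + αρB; i.e., ‖∇F(w) − ∇F(u)‖ ≤ (4L + αρB)‖w − u‖ for all w, u. -/
set_option maxHeartbeats 1600000

open ContinuousLinearMap in
theorem stmt_16 {m : ℕ} (f : EuclideanSpace ℝ (Fin m) → ℝ) (L ρ B α : ℝ)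
    (hf : ContDiff ℝ 2 f)
    (hL : ∀ w u, ‖gradient f w - gradient f u‖ ≤ L * ‖w - u‖)
    (hρ : ∀ w u, ‖fderiv ℝ (gradient f) w - fderiv ℝ (gradient f) u‖ ≤ ρ * ‖w - u‖)
    (hB : ∀ w, ‖gradient f w‖ ≤ B)
    (hα : 0 < α) (hαL : α ≤ 1 / L) :
    ∀ w u, ‖gradient (fun x => f (x - α • gradient f x)) w -
              gradient (fun x => f (x - α • gradient f x)) u‖
      ≤ (4 * L + α * ρ * B) * ‖w - u‖ := by
  have hLpos : 0 < L := by
    by_contra h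
    push_neg at h
    rcases h.lt_or_eq with h' | h'
    · have : 1 / L < 0 := div_neg_of_pos_of_neg one_pos h'
      linarith
    · rw [h', div_zero] at hαL; linarith
  have hB0 : 0 ≤ B := le_trans (norm_nonneg _) (hB 0)
  -- gradient f is C¹
  have hfd : Differentiable ℝ f := hf.differentiable (by norm_num)
  have hgradC1 : ContDiff ℝ 1 (gradient f) := by
    have h1 : ContDiff ℝ 1 (fderiv ℝ f) := hf.fderiv_right (by norm_num)
    exact (InnerProductSpace.toDual ℝ (EuclideanSpace ℝ (Fin m))).symm.contDiff.comp h1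
  have hgradD : Differentiable ℝ (gradient f) := hgradC1.differentiable one_ne_zero
  -- the inner map g
  set g : (EuclideanSpace ℝ (Fin m)) → (EuclideanSpace ℝ (Fin m)) := fun x => x - α • gradient f x with hg
  have hgD : Differentiable ℝ g := differentiable_id.sub ((hgradD).const_smul α)
  -- Lipschitz of gradient f
  have hLip : LipschitzWith L.toNNReal (gradient f) := by
    refine LipschitzWith.of_dist_le_mul fun x y => ?_
    rw [dist_eq_norm, dist_eq_norm, Real.coe_toNNReal _ hLpos.le]
    exact hL x y
  have hHle : ∀ x, ‖fderiv ℝ (gradient f) x‖ ≤ L := by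
    intro x
    have := norm_fderiv_le_of_lipschitz ℝ hLip (x₀ := x)
    rwa [Real.coe_toNNReal _ hLpos.le] at this
  -- derivative of g
  have hgfd : ∀ x, HasFDerivAt g (ContinuousLinearMap.id ℝ (EuclideanSpace ℝ (Fin m)) - α • fderiv ℝ (gradient f) x) x := by
    intro x
    exact (hasFDerivAt_id x).sub ((hgradD x).hasFDerivAt.const_smul α)
  -- gradient of F via adjoint
  set A : (EuclideanSpace ℝ (Fin m)) → ((EuclideanSpace ℝ (Fin m)) →L[ℝ] (EuclideanSpace ℝ (Fin m))) := fun x => ContinuousLinearMap.id ℝ (EuclideanSpace ℝ (Fin m)) - α • fderiv ℝ (gradient f) x with hA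
  have hgradF : ∀ x, gradient (fun x => f (g x)) x = adjoint (A x) (gradient f (g x)) := by
    intro x
    have hF : HasFDerivAt (fun x => f (g x)) ((fderiv ℝ f (g x)).comp (A x)) x :=
      (hfd (g x)).hasFDerivAt.comp x (hgfd x)
    have : HasGradientAt (fun x => f (g x)) (adjoint (A x) (gradient f (g x))) x := by
      rw [hasGradientAt_iff_hasFDerivAt]
      refine hF.congr_fderiv ?_; symm
      ext v
      rw [InnerProductSpace.toDual_apply_apply, ContinuousLinearMap.adjoint_inner_left]
      have : fderiv ℝ f (g x) = InnerProductSpace.toDual ℝ (EuclideanSpace ℝ (Fin m)) (gradient f (g x)) := by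
        simp [gradient]
      rw [ContinuousLinearMap.comp_apply, this, InnerProductSpace.toDual_apply_apply]
    exact this.gradient
  intro w u
  rw [hgradF w, hgradF u]
  have hnormA : ∀ x, ‖A x‖ ≤ 2 := by
    intro x
    calc ‖A x‖ ≤ ‖ContinuousLinearMap.id ℝ (EuclideanSpace ℝ (Fin m))‖ + ‖α • fderiv ℝ (gradient f) x‖ := norm_sub_le _ _
    _ ≤ 1 + α * L := by
        refine add_le_add norm_id_le ?_
        refine (ContinuousLinearMap.opNorm_smul_le _ _).trans ?_
        rw [Real.norm_of_nonneg hα.le]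
        exact mul_le_mul_of_nonneg_left (hHle x) hα.le
    _ ≤ 1 + 1 := by
        have : α * L ≤ 1 := by
          rw [div_eq_mul_inv, one_mul] at hαL
          calc α * L ≤ L⁻¹ * L := by gcongr
          _ = 1 := inv_mul_cancel₀ hLpos.ne'
        linarith
    _ = 2 := by norm_num
  have key : adjoint (A w) (gradient f (g w)) - adjoint (A u) (gradient f (g u))
      = adjoint (A w) (gradient f (g w) - gradient f (g u))
        + (adjoint (A w) - adjoint (A u)) (gradient f (g u)) := by
    simp only [map_sub, ContinuousLinearMap.sub_apply]
    abel
  rw [key]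
  have hαL1 : α * L ≤ 1 := by
    rw [div_eq_mul_inv, one_mul] at hαL
    calc α * L ≤ L⁻¹ * L := by gcongr
    _ = 1 := inv_mul_cancel₀ hLpos.ne'
  have hgwu : ‖g w - g u‖ ≤ 2 * ‖w - u‖ := by
    have heq : g w - g u = (w - u) - α • (gradient f w - gradient f u) := by
      simp [hg, smul_sub]; abel
    rw [heq]
    calc ‖(w - u) - α • (gradient f w - gradient f u)‖
        ≤ ‖w - u‖ + ‖α • (gradient f w - gradient f u)‖ := norm_sub_le _ _
    _ ≤ ‖w - u‖ + α * (L * ‖w - u‖) := by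
        refine add_le_add le_rfl ?_
        refine (norm_smul_le _ _).trans ?_
        rw [Real.norm_of_nonneg hα.le]
        exact mul_le_mul_of_nonneg_left (hL w u) hα.le
    _ ≤ ‖w - u‖ + 1 * ‖w - u‖ := by
        gcongr ‖w - u‖ + ?_
        rw [← mul_assoc]
        exact mul_le_mul_of_nonneg_right hαL1 (norm_nonneg _)
    _ = 2 * ‖w - u‖ := by ring
  have h1 : ‖adjoint (A w) (gradient f (g w) - gradient f (g u))‖ ≤ 4 * L * ‖w - u‖ := by
    calc ‖adjoint (A w) (gradient f (g w) - gradient f (g u))‖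
        ≤ ‖adjoint (A w)‖ * ‖gradient f (g w) - gradient f (g u)‖ := le_opNorm _ _
    _ ≤ 2 * (L * (2 * ‖w - u‖)) := by
        rw [LinearIsometryEquiv.norm_map ContinuousLinearMap.adjoint _]
        refine mul_le_mul (hnormA w) ?_ (norm_nonneg _) (by norm_num)
        exact le_trans (hL (g w) (g u)) (by
          exact mul_le_mul_of_nonneg_left hgwu hLpos.le)
    _ = 4 * L * ‖w - u‖ := by ring
  have h2 : ‖(adjoint (A w) - adjoint (A u)) (gradient f (g u))‖ ≤ α * ρ * B * ‖w - u‖ := by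
    have hAA : ‖adjoint (A w) - adjoint (A u)‖ = ‖A w - A u‖ := by
      rw [← map_sub (ContinuousLinearMap.adjoint (𝕜 := ℝ) (E := (EuclideanSpace ℝ (Fin m))) (F := (EuclideanSpace ℝ (Fin m))) : _), LinearIsometryEquiv.norm_map ContinuousLinearMap.adjoint _]
    have hAsub : A w - A u = -(α • (fderiv ℝ (gradient f) w - fderiv ℝ (gradient f) u)) := by
      simp only [hA, smul_sub]
      abel
    have hAn : ‖adjoint (A w) - adjoint (A u)‖ ≤ α * (ρ * ‖w - u‖) := by
      rw [hAA, hAsub, norm_neg]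
      refine (ContinuousLinearMap.opNorm_smul_le _ _).trans ?_
      rw [Real.norm_of_nonneg hα.le]
      exact mul_le_mul_of_nonneg_left (hρ w u) hα.le
    calc ‖(adjoint (A w) - adjoint (A u)) (gradient f (g u))‖
        ≤ ‖adjoint (A w) - adjoint (A u)‖ * ‖gradient f (g u)‖ := le_opNorm _ _
    _ ≤ (α * (ρ * ‖w - u‖)) * B := by
        refine mul_le_mul hAn (hB _) (norm_nonneg _) ?_
        exact le_trans (norm_nonneg _) hAn
    _ = α * ρ * B * ‖w - u‖ := by ring
  calc ‖adjoint (A w) (gradient f (g w) - gradient f (g u))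
        + (adjoint (A w) - adjoint (A u)) (gradient f (g u))‖
      ≤ ‖adjoint (A w) (gradient f (g w) - gradient f (g u))‖
        + ‖(adjoint (A w) - adjoint (A u)) (gradient f (g u))‖ := norm_add_le _ _
  _ ≤ 4 * L * ‖w - u‖ + α * ρ * B * ‖w - u‖ := add_le_add h1 h2
  _ = (4 * L + α * ρ * B) * ‖w - u‖ := by ring
end

section
/- Suppose each of n differentiable functions fᵢ : ℝᵐ → ℝ satisfies (1/n)∑ᵢ‖∇fᵢ(w) − ∇f(w)‖² ≤ γ_G² and (1/n)∑ᵢ‖∇²fᵢ(w) − ∇²f(w)‖² ≤ γ_H² where f = (1/n)∑ᵢ fᵢ, gradients are bounded by B and ∇fᵢ are L-Lipschitz. Then for Fᵢ(w) = fᵢ(w − α∇fᵢ(w)) with 0 < α ≤ 1/L and F = (1/n)∑ᵢFᵢ: (1/n)∑ᵢ‖∇Fᵢ(w) − ∇F(w)‖² ≤ 3B²α²γ_H² + 192γ_G² for all w. -/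
open InnerProductSpace Finset ContinuousLinearMap

variable {E : Type*} [NormedAddCommGroup E] [InnerProductSpace ℝ E] [CompleteSpace E]

lemma toDual_gradient' (h : E → ℝ) (x : E) :
    InnerProductSpace.toDual ℝ E (gradient h x) = fderiv ℝ h x :=
  (InnerProductSpace.toDual ℝ E).apply_symm_apply _

lemma hasGradientAt_avg {n : ℕ} (h : Fin n → E → ℝ) (c : ℝ) (x : E)
    (hd : ∀ j, DifferentiableAt ℝ (h j) x) :
    HasGradientAt (fun y => c * ∑ j, h j y) (c • ∑ j, gradient (h j) x) x := by
  have H : HasFDerivAt (fun y => ∑ j, h j y) (∑ j, fderiv ℝ (h j) x) x :=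
    HasFDerivAt.fun_sum fun j _ => (hd j).hasFDerivAt
  have H2 := H.const_mul c
  rw [hasGradientAt_iff_hasFDerivAt]
  convert H2 using 1
  · rfl
  rw [map_smulₛₗ, map_sum]
  simp [toDual_gradient', starRingEnd_apply]

lemma gradient_diff_of_contDiff (h : E → ℝ) (hh : ContDiff ℝ 2 h) :
    Differentiable ℝ (gradient h) := by
  have h1 : ContDiff ℝ 1 (fderiv ℝ h) := hh.fderiv_right (by norm_num : (1:WithTop ℕ∞) + 1 ≤ 2)
  have h2 : Differentiable ℝ (fderiv ℝ h) := h1.differentiable one_ne_zero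
  exact fun x => ((InnerProductSpace.toDual ℝ E).symm.toContinuousLinearEquiv.differentiable.differentiableAt).comp x (h2 x)

lemma adjoint_norm' (T : E →L[ℝ] E) : ‖ContinuousLinearMap.adjoint T‖ = ‖T‖ :=
  LinearIsometryEquiv.norm_map (ContinuousLinearMap.adjoint : (E →L[ℝ] E) ≃ₗᵢ⋆[ℝ] (E →L[ℝ] E)) T

lemma smul_norm' (c : ℝ) (T : E →L[ℝ] E) : ‖c • T‖ = |c| * ‖T‖ := by
  rw [norm_smul c T, Real.norm_eq_abs]

lemma hasGradientAt_maml (g : E → ℝ) (α : ℝ) (w : E) (hg : ContDiff ℝ 2 g) :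
    HasGradientAt (fun x => g (x - α • gradient g x))
      (ContinuousLinearMap.adjoint (ContinuousLinearMap.id ℝ E - α • fderiv ℝ (gradient g) w)
        (gradient g (w - α • gradient g w))) w := by
  have hgd : Differentiable ℝ (gradient g) := gradient_diff_of_contDiff g hg
  set A : E →L[ℝ] E := ContinuousLinearMap.id ℝ E - α • fderiv ℝ (gradient g) w with hA_def
  have hA : HasFDerivAt (fun x => x - α • gradient g x) A w :=
    (hasFDerivAt_id w).sub (((hgd w).hasFDerivAt).const_smul α)
  have hfx : HasFDerivAt g (fderiv ℝ g (w - α • gradient g w)) (w - α • gradient g w) :=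
    (hg.differentiable (by norm_num) _).hasFDerivAt
  have hcomp := hfx.comp w hA
  rw [hasGradientAt_iff_hasFDerivAt]
  convert hcomp using 1
  · rfl
  · rfl
  · rfl
  rw [← toDual_gradient' g (w - α • gradient g w)]
  ext x
  simp [InnerProductSpace.toDual_apply_apply, ContinuousLinearMap.adjoint_inner_left]

set_option maxHeartbeats 2000000 in
theorem stmt_18 {m n : ℕ} (f : Fin n → EuclideanSpace ℝ (Fin m) → ℝ)
    (L B α γG γH : ℝ)
    (hf : ∀ i, ContDiff ℝ 2 (f i))
    (hL : ∀ i w u, ‖gradient (f i) w - gradient (f i) u‖ ≤ L * ‖w - u‖)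
    (hB : ∀ i w, ‖gradient (f i) w‖ ≤ B)
    (hγG : ∀ w, (1 / n : ℝ) *
      ∑ i, ‖gradient (f i) w - gradient (fun x => (1 / n : ℝ) * ∑ j, f j x) w‖ ^ 2
        ≤ γG ^ 2)
    (hγH : ∀ w, (1 / n : ℝ) *
      ∑ i, ‖fderiv ℝ (gradient (f i)) w -
            fderiv ℝ (gradient (fun x => (1 / n : ℝ) * ∑ j, f j x)) w‖ ^ 2
        ≤ γH ^ 2)
    (hα : 0 < α) (hαL : α ≤ 1 / L)
    (F : Fin n → EuclideanSpace ℝ (Fin m) → ℝ)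
    (hF : ∀ i, F i = fun x => f i (x - α • gradient (f i) x)) :
    ∀ w, (1 / n : ℝ) *
      ∑ i, ‖gradient (F i) w - gradient (fun x => (1 / n : ℝ) * ∑ j, F j x) w‖ ^ 2
        ≤ 3 * B ^ 2 * α ^ 2 * γH ^ 2 + 192 * γG ^ 2 := by
  intro w
  rcases Nat.eq_zero_or_pos n with hn | hn
  · subst hn
    simp only [Finset.univ_eq_empty, Finset.sum_empty, mul_zero]
    positivity
  have hN : (0:ℝ) < n := by exact_mod_cast hn
  have hL0 : (0:ℝ) < L := by
    by_contra h
    push_neg at h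
    have h1 : 1 / L ≤ 0 := by
      rcases lt_or_eq_of_le h with h' | h'
      · exact le_of_lt (div_neg_of_pos_of_neg one_pos h')
      · rw [h']; norm_num
    linarith
  have hαL' : α * L ≤ 1 := by
    rw [le_div_iff₀ hL0] at hαL; linarith
  have hB0 : (0:ℝ) ≤ B := le_trans (norm_nonneg _) (hB ⟨0, hn⟩ w)
  have hfd : ∀ i, Differentiable ℝ (f i) := fun i => (hf i).differentiable (by norm_num)
  have hgd : ∀ i, Differentiable ℝ (gradient (f i)) := fun i => gradient_diff_of_contDiff _ (hf i)
  set fbar := fun x : EuclideanSpace ℝ (Fin m) => (1 / n : ℝ) * ∑ j, f j x with hfbar_def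
  have gbar : ∀ x, gradient fbar x = (1/n:ℝ) • ∑ j, gradient (f j) x :=
    fun x => (hasGradientAt_avg f _ x (fun j => (hfd j x))).gradient
  -- Hessians
  set Hh : Fin n → EuclideanSpace ℝ (Fin m) →L[ℝ] EuclideanSpace ℝ (Fin m) := fun j => fderiv ℝ (gradient (f j)) w with hHh_def
  have hHle : ∀ j, ‖Hh j‖ ≤ L := by
    intro j
    have lip : LipschitzWith (Real.toNNReal L) (gradient (f j)) := by
      apply LipschitzWith.of_dist_le_mul
      intro x y
      rw [dist_eq_norm, dist_eq_norm]
      calc ‖gradient (f j) x - gradient (f j) y‖ ≤ L * ‖x - y‖ := hL j x y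
        _ = (Real.toNNReal L : ℝ) * ‖x - y‖ := by rw [Real.coe_toNNReal _ hL0.le]
    have := norm_fderiv_le_of_lipschitz ℝ lip (x₀ := w)
    rwa [Real.coe_toNNReal _ hL0.le] at this
  have hfdsum : HasFDerivAt (fun x => (1/n:ℝ) • ∑ j, gradient (f j) x) ((1/n:ℝ) • ∑ j, Hh j) w :=
    by have := (HasFDerivAt.fun_sum (u := Finset.univ) fun j _ => ((hgd j) w).hasFDerivAt).const_smul (1/n:ℝ); exact this
  have Hbar_eq : fderiv ℝ (gradient fbar) w = (1/n:ℝ) • ∑ j, Hh j := by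
    rw [funext gbar]; exact hfdsum.fderiv
  set Hbar := fderiv ℝ (gradient fbar) w with hHbar_def
  -- linear maps
  set A : Fin n → EuclideanSpace ℝ (Fin m) →L[ℝ] EuclideanSpace ℝ (Fin m) := fun j => ContinuousLinearMap.id ℝ (EuclideanSpace ℝ (Fin m)) - α • Hh j with hA_def
  set Abar : EuclideanSpace ℝ (Fin m) →L[ℝ] EuclideanSpace ℝ (Fin m) := ContinuousLinearMap.id ℝ (EuclideanSpace ℝ (Fin m)) - α • Hbar with hAbar_def
  have hAbar_eq : Abar = (1/n:ℝ) • ∑ j, A j := by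
    have hsum : ∑ j : Fin n, A j = (n:ℝ) • ContinuousLinearMap.id ℝ (EuclideanSpace ℝ (Fin m)) - α • ∑ j, Hh j := by
      rw [Finset.sum_sub_distrib, Finset.sum_const, card_univ, Fintype.card_fin, ← Finset.smul_sum]
      module
    rw [hAbar_def, hsum, Hbar_eq]
    match_scalars <;> field_simp
  set Madj : Fin n → EuclideanSpace ℝ (Fin m) →L[ℝ] EuclideanSpace ℝ (Fin m) := fun j => ContinuousLinearMap.adjoint (A j) with hMadj_def
  set Mbar : EuclideanSpace ℝ (Fin m) →L[ℝ] EuclideanSpace ℝ (Fin m) := ContinuousLinearMap.adjoint Abar with hMbar_def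
  have hMbar_eq : Mbar = (1/n:ℝ) • ∑ j, Madj j := by
    rw [hMbar_def, hAbar_eq, map_smulₛₗ, map_sum]
    simp [starRingEnd_apply]
    rfl
  -- gradients of F
  set u : Fin n → EuclideanSpace ℝ (Fin m) := fun j => gradient (f j) (w - α • gradient (f j) w) with hu_def
  have hgradF : ∀ j, gradient (F j) w = Madj j (u j) := by
    intro j
    rw [hF j]
    exact (hasGradientAt_maml (f j) α w (hf j)).gradient
  have hFdiff : ∀ j, DifferentiableAt ℝ (F j) w := by
    intro j; rw [hF j]; exact (hasGradientAt_maml (f j) α w (hf j)).differentiableAt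
  set Fbar := fun x : EuclideanSpace ℝ (Fin m) => (1 / n : ℝ) * ∑ j, F j x with hFbar_def
  have gFbar : gradient Fbar w = (1/n:ℝ) • ∑ j, Madj j (u j) := by
    rw [(hasGradientAt_avg F _ w hFdiff).gradient]
    congr 1
    exact Finset.sum_congr rfl fun j _ => hgradF j
  set p := w - α • gradient fbar w with hp_def
  set v := gradient fbar p with hv_def
  set d : Fin n → ℝ := fun j => ‖gradient (f j) w - gradient fbar w‖ with hd_def
  set e : Fin n → ℝ := fun j => ‖gradient (f j) p - v‖ with he_def
  set hs : Fin n → ℝ := fun j => ‖Hh j - Hbar‖ with hhs_def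
  have hdnn : ∀ j, 0 ≤ d j := fun j => norm_nonneg _
  have henn : ∀ j, 0 ≤ e j := fun j => norm_nonneg _
  have hsnn : ∀ j, 0 ≤ hs j := fun j => norm_nonneg _
  have hv : ‖v‖ ≤ B := by
    rw [hv_def, gbar p]
    calc ‖(1/n:ℝ) • ∑ j, gradient (f j) p‖ = (1/n:ℝ) * ‖∑ j, gradient (f j) p‖ := by
          rw [norm_smul, Real.norm_eq_abs, abs_of_nonneg (by positivity)]
      _ ≤ (1/n:ℝ) * ∑ j, ‖gradient (f j) p‖ := by
          have := norm_sum_le (Finset.univ : Finset (Fin n)) (fun j => gradient (f j) p)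
          have h0 : (0:ℝ) ≤ 1/n := by positivity
          exact mul_le_mul_of_nonneg_left this h0
      _ ≤ (1/n:ℝ) * ∑ _j : Fin n, B := by
          have h0 : (0:ℝ) ≤ 1/n := by positivity
          exact mul_le_mul_of_nonneg_left (Finset.sum_le_sum fun j _ => hB j p) h0
      _ = B := by rw [Finset.sum_const, card_univ, Fintype.card_fin, nsmul_eq_mul]; field_simp
  have hMnorm : ∀ j, ‖Madj j‖ ≤ 2 := by
    intro j
    have h1 : ‖Madj j‖ = ‖A j‖ := adjoint_norm' _
    rw [h1, hA_def]
    calc ‖ContinuousLinearMap.id ℝ (EuclideanSpace ℝ (Fin m)) - α • Hh j‖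
        ≤ ‖ContinuousLinearMap.id ℝ (EuclideanSpace ℝ (Fin m))‖ + ‖α • Hh j‖ := norm_sub_le _ _
      _ ≤ 1 + α * L := by
          have h2 : ‖α • Hh j‖ = α * ‖Hh j‖ := by
            rw [smul_norm', abs_of_pos hα]
          have h3 : α * ‖Hh j‖ ≤ α * L := mul_le_mul_of_nonneg_left (hHle j) hα.le
          have h4 := ContinuousLinearMap.norm_id_le (E := EuclideanSpace ℝ (Fin m)) (𝕜 := ℝ)
          rw [h2]; linarith
      _ ≤ 2 := by linarith
  have hMdiff : ∀ j, ‖Madj j - Mbar‖ ≤ α * hs j := by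
    intro j
    have h1 : Madj j - Mbar = ContinuousLinearMap.adjoint (A j - Abar) := (map_sub _ _ _).symm
    have h2 : A j - Abar = α • (Hbar - Hh j) := by rw [hA_def, hAbar_def]; module
    rw [h1, h2]
    rw [adjoint_norm', smul_norm', abs_of_pos hα, norm_sub_rev]
  have hr : ∀ j, ‖u j - v‖ ≤ d j + e j := by
    intro j
    have split : u j - v = (u j - gradient (f j) p) + (gradient (f j) p - v) := by abel
    rw [split]
    refine le_trans (norm_add_le _ _) ?_
    have h1 : ‖u j - gradient (f j) p‖ ≤ L * ‖(w - α • gradient (f j) w) - p‖ :=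
      hL j (w - α • gradient (f j) w) p
    have h2 : (w - α • gradient (f j) w) - p = α • (gradient fbar w - gradient (f j) w) := by
      rw [hp_def]; module
    rw [h2] at h1
    have h2b : ‖α • (gradient fbar w - gradient (f j) w)‖ = α * d j := by
      rw [norm_smul _ _, Real.norm_eq_abs, abs_of_pos hα, norm_sub_rev]
    rw [h2b] at h1
    have h3 : L * (α * d j) ≤ d j := by nlinarith [hdnn j]
    have h4 : ‖gradient (f j) p - v‖ = e j := rfl
    rw [h4]
    have h1' : ‖u j - gradient (f j) p‖ ≤ L * (α * d j) := h1
    linarith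
  have hdecomp : ∀ i, gradient (F i) w - gradient Fbar w
      = (Madj i - Mbar) v + (Madj i (u i - v) - (1/n:ℝ) • ∑ j, Madj j (u j - v)) := by
    intro i
    have hMbarv : Mbar v = (1/n:ℝ) • ∑ j, Madj j v := by
      rw [hMbar_eq]; simp [ContinuousLinearMap.sum_apply]
    rw [hgradF i, gFbar]
    simp only [map_sub, ContinuousLinearMap.sub_apply, smul_sub, Finset.sum_sub_distrib]
    rw [hMbarv]
    abel
  set S := (1/n:ℝ) * ∑ j, (d j + e j) with hS_def
  have key : ∀ i, ‖gradient (F i) w - gradient Fbar w‖ ≤ α*B*hs i + 2*(d i + e i) + 2*S := by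
    intro i
    rw [hdecomp i]
    refine le_trans (norm_add_le _ _) ?_
    have t1 : ‖(Madj i - Mbar) v‖ ≤ (α * hs i) * B :=
      le_trans (ContinuousLinearMap.le_opNorm _ _)
        (mul_le_mul (hMdiff i) hv (norm_nonneg v) (mul_nonneg hα.le (hsnn i)))
    have t21 : ‖Madj i (u i - v)‖ ≤ 2 * (d i + e i) :=
      le_trans (ContinuousLinearMap.le_opNorm _ _)
        (mul_le_mul (hMnorm i) (hr i) (norm_nonneg _) (by norm_num))
    have t22 : ‖(1/n:ℝ) • ∑ j, Madj j (u j - v)‖ ≤ 2*S := by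
      rw [norm_smul, Real.norm_eq_abs, abs_of_nonneg (by positivity : (0:ℝ) ≤ 1/n)]
      have h5 : ‖∑ j, Madj j (u j - v)‖ ≤ ∑ j, 2*(d j + e j) := by
        refine le_trans (norm_sum_le _ _) (Finset.sum_le_sum fun j _ => ?_)
        exact le_trans (ContinuousLinearMap.le_opNorm _ _)
          (mul_le_mul (hMnorm j) (hr j) (norm_nonneg _) (by norm_num))
      have h6 : (1/n:ℝ) * ∑ j, 2*(d j + e j) = 2*S := by
        rw [hS_def, ← Finset.mul_sum]; ring
      calc (1/n:ℝ) * ‖∑ j, Madj j (u j - v)‖ ≤ (1/n:ℝ) * ∑ j, 2*(d j + e j) :=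
            mul_le_mul_of_nonneg_left h5 (by positivity)
        _ = 2*S := h6
    have t2 : ‖Madj i (u i - v) - (1/n:ℝ) • ∑ j, Madj j (u j - v)‖ ≤ 2*(d i + e i) + 2*S :=
      le_trans (norm_sub_le _ _) (by linarith)
    have t1' : ‖(Madj i - Mbar) v‖ ≤ α*B*hs i := le_trans t1 (le_of_eq (by ring))
    linarith
  have key2 : ∀ i, ‖gradient (F i) w - gradient Fbar w‖^2
      ≤ 3*(α*B*hs i)^2 + 12*(d i+e i)^2 + 12*S^2 := by
    intro i
    have h1 := key i
    have h0 : 0 ≤ ‖gradient (F i) w - gradient Fbar w‖ := norm_nonneg _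
    have hSnn : 0 ≤ S := by
      have hsum : (0:ℝ) ≤ ∑ j, (d j + e j) := Finset.sum_nonneg fun j _ => by
        have := hdnn j; have := henn j; linarith
      rw [hS_def]
      exact mul_nonneg (by positivity) hsum
    have hx : 0 ≤ α*B*hs i := mul_nonneg (mul_nonneg hα.le hB0) (hsnn i)
    nlinarith [sq_nonneg (α*B*hs i - 2*(d i + e i)), sq_nonneg (α*B*hs i - 2*S),
      sq_nonneg (2*(d i+e i) - 2*S), hdnn i, henn i]
  have hH2 : (1/n:ℝ)*∑ i, hs i^2 ≤ γH^2 := hγH w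
  have hd2 : (1/n:ℝ)*∑ i, d i^2 ≤ γG^2 := hγG w
  have he2 : (1/n:ℝ)*∑ i, e i^2 ≤ γG^2 := hγG p
  have hde2 : (1/n:ℝ)*∑ i, (d i + e i)^2 ≤ 4*γG^2 := by
    have h1 : ∀ i : Fin n, (d i + e i)^2 ≤ 2*d i^2 + 2*e i^2 := fun i => by
      nlinarith [sq_nonneg (d i - e i)]
    calc (1/n:ℝ)*∑ i, (d i + e i)^2 ≤ (1/n:ℝ)*∑ i, (2*d i^2 + 2*e i^2) :=
          mul_le_mul_of_nonneg_left (Finset.sum_le_sum fun i _ => h1 i) (by positivity)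
      _ = 2*((1/n:ℝ)*∑ i, d i^2) + 2*((1/n:ℝ)*∑ i, e i^2) := by
          rw [Finset.sum_add_distrib, ← Finset.mul_sum, ← Finset.mul_sum]; ring
      _ ≤ 4*γG^2 := by linarith
  have hS2 : S^2 ≤ (1/n:ℝ) * ∑ j, (d j + e j)^2 := by
    have h1 := sq_sum_le_card_mul_sum_sq (s := (Finset.univ : Finset (Fin n))) (f := fun j => d j + e j)
    rw [card_univ, Fintype.card_fin] at h1
    rw [hS_def, mul_pow]
    calc (1/n:ℝ)^2 * (∑ j, (d j + e j))^2 ≤ (1/n:ℝ)^2 * ((n:ℝ) * ∑ j, (d j+e j)^2) := by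
          have h0 : (0:ℝ) ≤ (1/n:ℝ)^2 := by positivity
          exact mul_le_mul_of_nonneg_left h1 h0
      _ = (1/n:ℝ) * ∑ j, (d j + e j)^2 := by field_simp
  have hS4 : S^2 ≤ 4*γG^2 := le_trans hS2 hde2
  have step1 : (1/n:ℝ) * ∑ i, ‖gradient (F i) w - gradient Fbar w‖^2
      ≤ (1/n:ℝ) * ∑ i, (3*(α*B*hs i)^2 + 12*(d i+e i)^2 + 12*S^2) :=
    mul_le_mul_of_nonneg_left (Finset.sum_le_sum fun i _ => key2 i) (by positivity)
  have expand : (1/n:ℝ) * ∑ i, (3*(α*B*hs i)^2 + 12*(d i+e i)^2 + 12*S^2)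
      = 3*(α*B)^2*((1/n:ℝ)*∑ i, hs i^2) + 12*((1/n:ℝ)*∑ i, (d i+e i)^2)
        + (1/n:ℝ)*(n:ℝ)*(12*S^2) := by
    rw [Finset.sum_add_distrib, Finset.sum_add_distrib, Finset.sum_const, card_univ,
      Fintype.card_fin, nsmul_eq_mul]
    have e1 : ∑ i : Fin n, 3*(α*B*hs i)^2 = 3*(α*B)^2*∑ i, hs i^2 := by
      rw [Finset.mul_sum]; exact Finset.sum_congr rfl fun i _ => by ring
    have e2 : ∑ i : Fin n, 12*(d i+e i)^2 = 12*∑ i, (d i+e i)^2 := by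
      rw [Finset.mul_sum]
    rw [e1, e2]; ring
  have hn1 : (1/n:ℝ)*(n:ℝ) = 1 := by field_simp
  rw [expand, hn1, one_mul] at step1
  have t1 : 3*(α*B)^2*((1/n:ℝ)*∑ i, hs i^2) ≤ 3*(α*B)^2*γH^2 :=
    mul_le_mul_of_nonneg_left hH2 (by positivity)
  have t2 : 12*((1/n:ℝ)*∑ i, (d i+e i)^2) ≤ 12*(4*γG^2) := by linarith
  have final : (1/n:ℝ) * ∑ i, ‖gradient (F i) w - gradient Fbar w‖^2
      ≤ 3*(α*B)^2*γH^2 + 96*γG^2 := by linarith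
  nlinarith [final, sq_nonneg γG]
end
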